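/- For every λ < 0, ∫₀¹ t · (|λ| / √(2π t (1−t)³)) · exp(−λ² t / (2(1−t))) dt = 1 − |λ| · exp(λ²/2) · ∫_{|λ|}^{∞} exp(−s²/2) ds. (Equivalently, the mean of the density f_{Z^λ} equals 1 − |λ| e^{λ²/2} ∫_{|λ|}^∞ e^{−s²/2} ds; this value is also the probability that the Vervaat bridge V(B^{λ,br}) stays above the line t ↦ λt.) -/

import Mathlib

open MeasureTheory Real

section FZAux

open Set

lemma exp_neg_mul_integral {b : ℝ} (hb : 0 < b) :
    ∫ v in Ioi (0:ℝ), Real.exp (-(b * v)) = 1 / b := by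
  have h := MeasureTheory.integral_comp_mul_left_Ioi (fun x => Real.exp (-x)) 0 hb
  simp only [mul_zero, integral_exp_neg_Ioi_zero, smul_eq_mul, mul_one] at h
  simpa [one_div] using h

lemma gauss_int (b : ℝ) (hb : 0 < b) :
    ∫ u in Ioi (0:ℝ), Real.exp (-(b * u ^ 2)) = Real.sqrt (π / b) / 2 := by
  simpa [neg_mul] using integral_gaussian_Ioi b

lemma gauss_integrableOn : IntegrableOn (fun u : ℝ => Real.exp (-(u ^ 2 / 2))) (Ioi 0) := by
  have : Integrable (fun u : ℝ => Real.exp (-((1:ℝ)/2) * u ^ 2)) := by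
    exact integrable_exp_neg_mul_sq (by norm_num)
  refine (this.congr ?_).integrableOn
  filter_upwards with u
  ring_nf

lemma frac_integrableOn {a : ℝ} (ha : 0 < a) :
    IntegrableOn (fun u : ℝ => a ^ 2 / (a ^ 2 + u ^ 2) * Real.exp (-(u ^ 2 / 2))) (Ioi 0) := by
  have hq : ∀ u : ℝ, 0 < a ^ 2 + u ^ 2 := fun u => by positivity
  refine Integrable.mono gauss_integrableOn ?_ ?_
  · refine (Continuous.aestronglyMeasurable ?_).restrict
    exact ((continuous_const.div (by continuity) fun u => (hq u).ne').mul
      (Real.continuous_exp.comp (by continuity)))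
  · filter_upwards with u
    rw [Real.norm_eq_abs, Real.norm_eq_abs, abs_of_nonneg (by positivity),
      abs_of_nonneg (by positivity)]
    have h1 : a ^ 2 / (a ^ 2 + u ^ 2) ≤ 1 := by
      rw [div_le_one (hq u)]; nlinarith [sq_nonneg u]
    nlinarith [Real.exp_pos (-(u ^ 2 / 2)), Real.exp_le_exp.mpr (le_refl (-(u^2/2)))]

lemma subst1 {a : ℝ} (ha : 0 < a) :
    ∫ t in Ioo (0:ℝ) 1, t * (a / Real.sqrt (2 * π * t * (1 - t) ^ 3) *
        Real.exp (-(a ^ 2 * t) / (2 * (1 - t)))) =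
    ∫ u in Ioi (0:ℝ), Real.sqrt (2 / π) * (u ^ 2 / (a ^ 2 + u ^ 2)) *
        Real.exp (-(u ^ 2 / 2)) := by
  have hq : ∀ u : ℝ, 0 < a ^ 2 + u ^ 2 := fun u => by positivity
  set f : ℝ → ℝ := fun u => u ^ 2 / (a ^ 2 + u ^ 2) with hf
  set f' : ℝ → ℝ := fun u => 2 * a ^ 2 * u / (a ^ 2 + u ^ 2) ^ 2 with hf'
  have hderiv : ∀ u ∈ Ioi (0:ℝ), HasDerivWithinAt f (f' u) (Ioi 0) u := by
    intro u _
    have h1 : HasDerivAt (fun u : ℝ => u ^ 2) (2 * u) u := by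
      simpa using hasDerivAt_pow 2 u
    have h2 : HasDerivAt (fun u : ℝ => a ^ 2 + u ^ 2) (2 * u) u := by
      exact h1.const_add (a ^ 2)
    have := h1.div h2 (hq u).ne'
    refine HasDerivAt.hasDerivWithinAt (by have h := this.congr_deriv (g' := f' u) (by show _ = (2 * a ^ 2 * u / (a ^ 2 + u ^ 2) ^ 2 : ℝ); ring); exact h)
  have hinj : InjOn f (Ioi 0) := by
    have : StrictMonoOn f (Ioi 0) := by
      intro u hu v hv huv
      simp only [hf, mem_Ioi] at *
      rw [div_lt_div_iff₀ (hq u) (hq v)]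
      have h2 : u ^ 2 < v ^ 2 := by nlinarith
      nlinarith [pow_pos ha 2]
    exact this.injOn
  have himg : f '' Ioi 0 = Ioo 0 1 := by
    ext t
    simp only [mem_image, mem_Ioo, mem_Ioi, hf]
    constructor
    · rintro ⟨u, hu, rfl⟩
      exact ⟨div_pos (by positivity) (hq u), by rw [div_lt_one (hq u)]; nlinarith⟩
    · rintro ⟨ht0, ht1⟩
      have h1t : 0 < 1 - t := by linarith
      refine ⟨Real.sqrt (a ^ 2 * t / (1 - t)), Real.sqrt_pos.mpr (by positivity), ?_⟩
      have hs : (Real.sqrt (a ^ 2 * t / (1 - t))) ^ 2 = a ^ 2 * t / (1 - t) :=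
        Real.sq_sqrt (by positivity)
      rw [hs]
      field_simp
      ring
  rw [← himg, integral_image_eq_integral_abs_deriv_smul measurableSet_Ioi hderiv hinj]
  refine setIntegral_congr_fun measurableSet_Ioi fun u hu => ?_
  simp only [mem_Ioi] at hu
  have hqu := hq u
  have key1 : (1 : ℝ) - u ^ 2 / (a ^ 2 + u ^ 2) = a ^ 2 / (a ^ 2 + u ^ 2) := by
    field_simp
    ring
  have key2 : Real.sqrt (2 * π * (u ^ 2 / (a ^ 2 + u ^ 2)) *
      (1 - u ^ 2 / (a ^ 2 + u ^ 2)) ^ 3)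
      = Real.sqrt (2 * π) * u * a ^ 3 / (a ^ 2 + u ^ 2) ^ 2 := by
    have h4 : (Real.sqrt (2 * π) * u * a ^ 3 / (a ^ 2 + u ^ 2) ^ 2) ^ 2
        = 2 * π * (u ^ 2 / (a ^ 2 + u ^ 2)) * (a ^ 2 / (a ^ 2 + u ^ 2)) ^ 3 := by
      rw [div_pow, mul_pow, mul_pow, Real.sq_sqrt (by positivity : (0:ℝ) ≤ 2 * π)]
      field_simp
    rw [key1, ← h4, Real.sqrt_sq (by positivity)]
  have key3 : -(a ^ 2 * (u ^ 2 / (a ^ 2 + u ^ 2))) / (2 * (1 - u ^ 2 / (a ^ 2 + u ^ 2)))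
      = -(u ^ 2 / 2) := by
    rw [key1]
    field_simp
  simp only [hf, hf', smul_eq_mul]
  rw [key2, key3, abs_of_pos (by positivity)]
  have hsπ : Real.sqrt (2 * π) ≠ 0 := by positivity
  have s3 : Real.sqrt (2 / π) = 2 / Real.sqrt (2 * π) := by
    rw [eq_div_iff hsπ, ← Real.sqrt_mul (by positivity)]
    rw [show 2 / π * (2 * π) = 4 by field_simp; ring]
    rw [show (4:ℝ) = 2 ^ 2 by norm_num, Real.sqrt_sq (by norm_num)]
  rw [s3]
  field_simp


lemma swap_aux {a : ℝ} (ha : 0 < a) :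
    ∫ u in Ioi (0:ℝ), a ^ 2 / (a ^ 2 + u ^ 2) * Real.exp (-(u ^ 2 / 2)) =
    ∫ v in Ioi (0:ℝ), (a ^ 2 * Real.exp (-(a ^ 2 * v))) *
      (Real.sqrt (π / (v + 1/2)) / 2) := by
  have hq : ∀ u : ℝ, 0 < a ^ 2 + u ^ 2 := fun u => by positivity
  have hinner : ∀ u : ℝ, (∫ v in Ioi (0:ℝ),
        (a ^ 2 * Real.exp (-(u ^ 2 / 2))) * Real.exp (-((a ^ 2 + u ^ 2) * v)))
      = a ^ 2 / (a ^ 2 + u ^ 2) * Real.exp (-(u ^ 2 / 2)) := by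
    intro u
    rw [integral_const_mul, exp_neg_mul_integral (hq u)]
    field_simp
  have hcont : Continuous (Function.uncurry (fun u v : ℝ =>
      (a ^ 2 * Real.exp (-(u ^ 2 / 2))) * Real.exp (-((a ^ 2 + u ^ 2) * v)))) := by
    apply Continuous.mul <;> fun_prop
  have hint : Integrable (Function.uncurry (fun u v : ℝ =>
      (a ^ 2 * Real.exp (-(u ^ 2 / 2))) * Real.exp (-((a ^ 2 + u ^ 2) * v))))
      ((volume.restrict (Ioi 0)).prod (volume.restrict (Ioi 0))) := by
    rw [integrable_prod_iff hcont.aestronglyMeasurable]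
    constructor
    · refine Filter.Eventually.of_forall fun u => ?_
      simp only [Function.uncurry_apply_pair]
      have h0 := (exp_neg_integrableOn_Ioi 0 (hq u)).const_mul
        (a ^ 2 * Real.exp (-(u ^ 2 / 2)))
      exact IntegrableOn.congr_fun h0 (fun v _ => by rw [neg_mul]) measurableSet_Ioi
    · refine (frac_integrableOn ha).congr ?_
      refine Filter.Eventually.of_forall fun u => ?_
      simp only [Function.uncurry_apply_pair]
      rw [← hinner u]
      refine (setIntegral_congr_fun measurableSet_Ioi fun v _ => ?_).symm
      exact norm_of_nonneg (by positivity)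
  calc ∫ u in Ioi (0:ℝ), a ^ 2 / (a ^ 2 + u ^ 2) * Real.exp (-(u ^ 2 / 2))
      = ∫ u in Ioi (0:ℝ), ∫ v in Ioi (0:ℝ),
          (a ^ 2 * Real.exp (-(u ^ 2 / 2))) * Real.exp (-((a ^ 2 + u ^ 2) * v)) :=
        (setIntegral_congr_fun measurableSet_Ioi fun u _ => (hinner u).symm)
    _ = ∫ v in Ioi (0:ℝ), ∫ u in Ioi (0:ℝ),
          (a ^ 2 * Real.exp (-(u ^ 2 / 2))) * Real.exp (-((a ^ 2 + u ^ 2) * v)) :=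
        integral_integral_swap hint
    _ = ∫ v in Ioi (0:ℝ), (a ^ 2 * Real.exp (-(a ^ 2 * v))) *
          (Real.sqrt (π / (v + 1/2)) / 2) := by
        refine setIntegral_congr_fun measurableSet_Ioi fun v hv => ?_
        have hv' : (0:ℝ) < v := hv
        have hb : (0:ℝ) < v + 1/2 := by linarith
        have hstep : (∫ u in Ioi (0:ℝ),
              (a ^ 2 * Real.exp (-(u ^ 2 / 2))) * Real.exp (-((a ^ 2 + u ^ 2) * v)))
            = ∫ u in Ioi (0:ℝ),
              (a ^ 2 * Real.exp (-(a ^ 2 * v))) * Real.exp (-((v + 1/2) * u ^ 2)) := by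
          refine setIntegral_congr_fun measurableSet_Ioi fun u _ => ?_
          rw [mul_assoc, ← Real.exp_add, mul_assoc, ← Real.exp_add]
          congr 1
          ring
        rw [hstep, integral_const_mul, gauss_int _ hb]

lemma subst2 {a : ℝ} (ha : 0 < a) :
    ∫ v in Ioi (0:ℝ), (a ^ 2 * Real.exp (-(a ^ 2 * v))) *
      (Real.sqrt (π / (v + 1/2)) / 2)
    = Real.sqrt (π / 2) * a * Real.exp (a ^ 2 / 2) *
      ∫ s in Ioi a, Real.exp (-(s ^ 2 / 2)) := by
  have ha2 : (0:ℝ) < a ^ 2 := by positivity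
  set φ : ℝ → ℝ := fun s => s ^ 2 / (2 * a ^ 2) - 1/2 with hφ
  set φ' : ℝ → ℝ := fun s => s / a ^ 2 with hφ'
  have hderiv : ∀ s ∈ Ioi a, HasDerivWithinAt φ (φ' s) (Ioi a) s := by
    intro s _
    have h1 : HasDerivAt (fun s : ℝ => s ^ 2) (2 * s) s := by
      simpa using hasDerivAt_pow 2 s
    have h2 := (h1.div_const (2 * a ^ 2)).sub_const (1/2)
    have h3 : (2:ℝ) * s / (2 * a ^ 2) = s / a ^ 2 := by
      rw [mul_div_mul_left _ _ (two_ne_zero)]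
    refine HasDerivAt.hasDerivWithinAt (by
      rw [hφ', hφ]
      simp only [h3] at h2
      exact h2.congr_deriv rfl)
  have hinj : InjOn φ (Ioi a) := by
    have : StrictMonoOn φ (Ioi a) := by
      intro u hu v hv huv
      simp only [hφ, mem_Ioi] at *
      have h2 : u ^ 2 < v ^ 2 := by nlinarith
      gcongr
    exact this.injOn
  have himg : φ '' Ioi a = Ioi 0 := by
    ext v
    simp only [mem_image, mem_Ioi, hφ]
    constructor
    · rintro ⟨s, hs, rfl⟩
      have h2 : a ^ 2 < s ^ 2 := by nlinarith
      have h3 : s ^ 2 / (2 * a ^ 2) - 1/2 = (s ^ 2 - a ^ 2) / (2 * a ^ 2) := by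
        field_simp
      rw [h3]
      exact div_pos (by nlinarith) (by positivity)
    · rintro hv
      refine ⟨Real.sqrt (a ^ 2 * (2 * v + 1)), ?_, ?_⟩
      · rw [Real.lt_sqrt (by positivity)]
        nlinarith
      · rw [Real.sq_sqrt (by positivity)]
        field_simp
        ring
  rw [← himg, integral_image_eq_integral_abs_deriv_smul measurableSet_Ioi hderiv hinj]
  rw [show Real.sqrt (π / 2) * a * Real.exp (a ^ 2 / 2) *
        ∫ s in Ioi a, Real.exp (-(s ^ 2 / 2))
      = ∫ s in Ioi a, Real.sqrt (π / 2) * a * Real.exp (a ^ 2 / 2) *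
        Real.exp (-(s ^ 2 / 2)) from (integral_const_mul _ _).symm]
  refine setIntegral_congr_fun measurableSet_Ioi fun s hs => ?_
  have hsa : a < s := hs
  have hs0 : 0 < s := lt_trans ha hsa
  simp only [hφ, hφ', smul_eq_mul]
  have key1 : -(a ^ 2 * (s ^ 2 / (2 * a ^ 2) - 1/2)) = a ^ 2 / 2 - s ^ 2 / 2 := by
    field_simp
    ring
  have key2 : s ^ 2 / (2 * a ^ 2) - 1/2 + 1/2 = s ^ 2 / (2 * a ^ 2) := by ring
  have key3 : Real.sqrt (π / (s ^ 2 / (2 * a ^ 2))) = Real.sqrt (2 * π) * a / s := by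
    have h4 : (Real.sqrt (2 * π) * a / s) ^ 2 = π / (s ^ 2 / (2 * a ^ 2)) := by
      rw [div_pow, mul_pow, Real.sq_sqrt (by positivity : (0:ℝ) ≤ 2 * π)]
      field_simp
    rw [← h4, Real.sqrt_sq (by positivity)]
  have key4 : Real.sqrt (π / 2) = Real.sqrt (2 * π) / 2 := by
    have h5 : (Real.sqrt (2 * π) / 2) ^ 2 = π / 2 := by
      rw [div_pow, Real.sq_sqrt (by positivity : (0:ℝ) ≤ 2 * π)]
      ring
    rw [← h5, Real.sqrt_sq (by positivity)]
  rw [key1, key2, key3, key4, abs_of_pos (by positivity),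
    show a ^ 2 / 2 - s ^ 2 / 2 = a ^ 2 / 2 + -(s ^ 2 / 2) by ring, Real.exp_add]
  field_simp

lemma gauss_whole : ∫ u in Ioi (0:ℝ), Real.exp (-(u ^ 2 / 2)) = Real.sqrt (2 * π) / 2 := by
  have h := gauss_int (1/2) (by norm_num)
  rw [show π / (1/2) = 2 * π by ring] at h
  rw [← h]
  refine setIntegral_congr_fun measurableSet_Ioi fun u _ => ?_
  ring_nf

lemma main_aux {a : ℝ} (ha : 0 < a) :
    ∫ t in Ioo (0:ℝ) 1, t * (a / Real.sqrt (2 * π * t * (1 - t) ^ 3) *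
        Real.exp (-(a ^ 2 * t) / (2 * (1 - t)))) =
    1 - a * Real.exp (a ^ 2 / 2) * ∫ s in Ioi a, Real.exp (-(s ^ 2 / 2)) := by
  have hq : ∀ u : ℝ, 0 < a ^ 2 + u ^ 2 := fun u => by positivity
  rw [subst1 ha]
  have hsplit : (∫ u in Ioi (0:ℝ), Real.sqrt (2 / π) * (u ^ 2 / (a ^ 2 + u ^ 2)) *
        Real.exp (-(u ^ 2 / 2)))
      = ∫ u in Ioi (0:ℝ), (Real.sqrt (2 / π) * Real.exp (-(u ^ 2 / 2)) -
        Real.sqrt (2 / π) * (a ^ 2 / (a ^ 2 + u ^ 2) * Real.exp (-(u ^ 2 / 2)))) := by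
    refine setIntegral_congr_fun measurableSet_Ioi fun u _ => ?_
    have h1 : u ^ 2 / (a ^ 2 + u ^ 2) = 1 - a ^ 2 / (a ^ 2 + u ^ 2) := by
      field_simp
      ring
    rw [h1]
    ring
  rw [hsplit, integral_sub (gauss_integrableOn.const_mul _)
    ((frac_integrableOn ha).const_mul _), integral_const_mul, integral_const_mul,
    gauss_whole, swap_aux ha, subst2 ha]
  have e1 : Real.sqrt (2 / π) * Real.sqrt (2 * π) = 2 := by
    rw [← Real.sqrt_mul (by positivity), show 2 / π * (2 * π) = 4 by field_simp; ring,
      show (4:ℝ) = 2 ^ 2 by norm_num, Real.sqrt_sq (by norm_num)]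
  have e2 : Real.sqrt (2 / π) * Real.sqrt (π / 2) = 1 := by
    rw [← Real.sqrt_mul (by positivity), show 2 / π * (π / 2) = 1 by field_simp,
      Real.sqrt_one]
  linear_combination (1/2) * e1 -
    (a * Real.exp (a ^ 2 / 2) * ∫ s in Ioi a, Real.exp (-(s ^ 2 / 2))) * e2

end FZAux

/-- the mean of the density `f_{Z^λ}` equals
`1 − |λ| e^{λ²/2} ∫_{|λ|}^∞ e^{−s²/2} ds`. -/
theorem fZ_mean (lam : ℝ) (hlam : lam < 0) :
    ∫ t in Set.Ioo (0 : ℝ) 1,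
        t * (|lam| / Real.sqrt (2 * π * t * (1 - t) ^ 3) *
          Real.exp (-(lam ^ 2 * t) / (2 * (1 - t)))) =
      1 - |lam| * Real.exp (lam ^ 2 / 2) *
        ∫ s in Set.Ioi |lam|, Real.exp (-s ^ 2 / 2) := by
  have ha : 0 < -lam := by linarith
  have h := main_aux ha
  simp only [neg_sq] at h
  rw [abs_of_neg hlam]
  rw [show (∫ s in Set.Ioi (-lam), Real.exp (-s ^ 2 / 2))
      = ∫ s in Set.Ioi (-lam), Real.exp (-(s ^ 2 / 2)) from
    setIntegral_congr_fun measurableSet_Ioi fun s _ => by rw [neg_div]]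
  exact h
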